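/- For all q ∈ (0,1), the derivative of q ↦ q²K(q) − K(q) + E(q) equals q·K(q). -/

import Mathlib

open Real Set Filter

noncomputable def Kc (q : ℝ) : ℝ := ∫ θ in (0:ℝ)..(π/2), 1 / Real.sqrt (1 - q^2 * Real.sin θ^2)

noncomputable def Ec (q : ℝ) : ℝ := ∫ θ in (0:ℝ)..(π/2), Real.sqrt (1 - q^2 * Real.sin θ^2)

noncomputable def fc (q : ℝ) : ℝ := (4*q^4 - 5*q^2 + 1) * Kc q + (-8*q^4 + 8*q^2 - 1) * Ec q

noncomputable def Fp (x θ : ℝ) : ℝ :=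
  (x^2 - 1) / Real.sqrt (1 - x^2 * Real.sin θ^2) + Real.sqrt (1 - x^2 * Real.sin θ^2)

noncomputable def Fp' (x θ : ℝ) : ℝ :=
  2*x / Real.sqrt (1 - x^2*Real.sin θ^2)
  + x*(x^2-1)*Real.sin θ^2 / ((1 - x^2*Real.sin θ^2) * Real.sqrt (1 - x^2*Real.sin θ^2))
  - x*Real.sin θ^2 / Real.sqrt (1 - x^2*Real.sin θ^2)

lemma w_pos {x : ℝ} (hx : |x| < 1) (θ : ℝ) : 0 < 1 - x^2 * Real.sin θ^2 := by
  have h1 : x^2 < 1 := by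
    have := abs_lt.mp hx; nlinarith [this.1, this.2]
  nlinarith [Real.sin_sq_le_one θ, sq_nonneg (Real.sin θ), sq_nonneg x]

lemma cont_sqrtw {x : ℝ} : Continuous (fun θ : ℝ => Real.sqrt (1 - x^2 * Real.sin θ^2)) :=
  (continuous_const.sub (continuous_const.mul ((Real.continuous_sin.pow 2)))).sqrt

lemma cont_inv_sqrtw {x : ℝ} (hx : |x| < 1) :
    Continuous (fun θ : ℝ => 1 / Real.sqrt (1 - x^2 * Real.sin θ^2)) :=
  continuous_const.div cont_sqrtw (fun θ => (Real.sqrt_pos.mpr (w_pos hx θ)).ne')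

lemma cont_Fp {x : ℝ} (hx : |x| < 1) : Continuous (Fp x) := by
  unfold Fp
  exact (continuous_const.div cont_sqrtw
    (fun θ => (Real.sqrt_pos.mpr (w_pos hx θ)).ne')).add cont_sqrtw

lemma cont_Fp' {x : ℝ} (hx : |x| < 1) : Continuous (Fp' x) := by
  unfold Fp'
  have h1 : ∀ θ : ℝ, Real.sqrt (1 - x^2 * Real.sin θ^2) ≠ 0 :=
    fun θ => (Real.sqrt_pos.mpr (w_pos hx θ)).ne'
  have h2 : Continuous fun θ : ℝ => (1 - x^2*Real.sin θ^2) :=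
    continuous_const.sub (continuous_const.mul ((Real.continuous_sin.pow 2)))
  exact ((continuous_const.div cont_sqrtw h1).add
    ((continuous_const.mul (Real.continuous_sin.pow 2)).div (h2.mul cont_sqrtw)
      (fun θ => mul_ne_zero (w_pos hx θ).ne' (h1 θ)))).sub
    ((continuous_const.mul (Real.continuous_sin.pow 2)).div cont_sqrtw h1)

lemma deriv_x {x : ℝ} (hx : |x| < 1) (θ : ℝ) :
    HasDerivAt (fun y => Fp y θ) (Fp' x θ) x := by
  set s := Real.sin θ ^ 2 with hs
  have hw : 0 < 1 - x^2 * s := w_pos hx θ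
  have hr : 0 < Real.sqrt (1 - x^2 * s) := Real.sqrt_pos.mpr hw
  have h1 : HasDerivAt (fun y : ℝ => 1 - y^2*s) (-(2*x*s)) x := by
    simpa using ((hasDerivAt_pow 2 x).mul_const s).const_sub 1
  have hsq : HasDerivAt (fun y => Real.sqrt (1 - y^2*s)) (1 / (2 * Real.sqrt (1 - x^2*s)) * (-(2*x*s))) x :=
    (Real.hasDerivAt_sqrt hw.ne').comp x h1
  have hinv : HasDerivAt (fun y => (Real.sqrt (1 - y^2*s))⁻¹)
      (-(1 / (2 * Real.sqrt (1 - x^2*s)) * (-(2*x*s))) / (Real.sqrt (1 - x^2*s))^2) x := hsq.inv hr.ne'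
  have hmul := (((hasDerivAt_pow 2 x).sub_const 1).mul hinv).add hsq
  have hfun : (fun y => Fp y θ) = fun y => (y^2 - 1) * (Real.sqrt (1 - y^2*s))⁻¹ + Real.sqrt (1 - y^2*s) := by
    funext y; simp [Fp, div_eq_mul_inv, hs]
  rw [hfun]
  refine hmul.congr_deriv ?_
  symm
  have h2 : Real.sqrt (1 - x^2*s) ^ 2 = 1 - x^2*s := Real.sq_sqrt hw.le
  simp only [Fp', ← hs]
  field_simp
  rw [show (2:ℕ) - 1 = 1 from rfl, pow_one, Nat.cast_ofNat]
  rw [h2]; ring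

lemma deriv_theta {x : ℝ} (hx : |x| < 1) (θ : ℝ) :
    HasDerivAt (fun t => x * Real.sin t * Real.cos t / Real.sqrt (1 - x^2 * Real.sin t^2))
      (Fp' x θ - x * (1 / Real.sqrt (1 - x^2 * Real.sin θ^2))) θ := by
  have hw : 0 < 1 - x^2 * Real.sin θ^2 := w_pos hx θ
  have hr : 0 < Real.sqrt (1 - x^2 * Real.sin θ^2) := Real.sqrt_pos.mpr hw
  have hnum : HasDerivAt (fun t => x * Real.sin t * Real.cos t)
      (x * Real.cos θ * Real.cos θ + x * Real.sin θ * (-Real.sin θ)) θ :=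
    ((Real.hasDerivAt_sin θ).const_mul x).mul (Real.hasDerivAt_cos θ)
  have hin : HasDerivAt (fun t => 1 - x^2 * Real.sin t^2)
      (-(x^2 * (2 * Real.sin θ * Real.cos θ))) θ := by
    have := ((Real.hasDerivAt_sin θ).pow 2).const_mul (x^2)
    simpa [mul_comm, mul_assoc, mul_left_comm] using this.const_sub 1
  have hden : HasDerivAt (fun t => Real.sqrt (1 - x^2 * Real.sin t^2))
      (1 / (2 * Real.sqrt (1 - x^2 * Real.sin θ^2)) * (-(x^2 * (2 * Real.sin θ * Real.cos θ)))) θ :=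
    (Real.hasDerivAt_sqrt hw.ne').comp θ hin
  have h := hnum.div hden hr.ne'
  refine h.congr_deriv ?_
  symm
  have h2 : Real.sqrt (1 - x^2 * Real.sin θ^2) ^ 2 = 1 - x^2 * Real.sin θ^2 := Real.sq_sqrt hw.le
  have hc : Real.cos θ ^ 2 = 1 - Real.sin θ ^ 2 := Real.cos_sq' θ
  simp only [Fp']
  set r := Real.sqrt (1 - x^2 * Real.sin θ^2) with hrdef
  have h3 : r ≠ 0 := hr.ne'
  have h4 : (1 - x^2 * Real.sin θ^2) ≠ 0 := hw.ne'
  linear_combination (norm := (field_simp; ring)) (x^3*Real.sin θ^2*Real.cos θ^2/((1-x^2*Real.sin θ^2)*r^3)) * h2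
    - (x^3*Real.sin θ^2/((1-x^2*Real.sin θ^2)*r) + x/r) * hc

lemma abs_div_le' {n d N dd : ℝ} (h1 : |n| ≤ N) (h2 : dd ≤ d) (h3 : 0 < dd) : |n/d| ≤ N/dd := by
  rw [abs_div, abs_of_pos (lt_of_lt_of_le h3 h2)]
  exact div_le_div₀ (le_trans (abs_nonneg _) h1) h1 h3 h2

set_option maxHeartbeats 1000000 in
theorem stmt_4 (q : ℝ) (hq : q ∈ Ioo (0:ℝ) 1) :
    HasDerivAt (fun q => q^2 * Kc q - Kc q + Ec q) (q * Kc q) q := by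
  obtain ⟨hq0, hq1⟩ := hq
  have hqabs : |q| < 1 := by rw [abs_lt]; constructor <;> linarith
  set ε : ℝ := (1 - q)/2 with hεdef
  have hε : 0 < ε := by simp only [hεdef]; linarith
  set a : ℝ := (1 + q)/2 with hadef
  have ha1 : a < 1 := by simp only [hadef]; linarith
  have ha0 : 0 < a := by simp only [hadef]; linarith
  set δ : ℝ := 1 - a^2 with hδdef
  have hδ : 0 < δ := by simp only [hδdef]; nlinarith
  have hδ1 : δ ≤ 1 := by simp only [hδdef]; nlinarith
  have hsδ : 0 < Real.sqrt δ := Real.sqrt_pos.mpr hδ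
  have hball : ∀ x ∈ Metric.ball q ε, |x| < a := by
    intro x hx
    rw [Metric.mem_ball, Real.dist_eq] at hx
    have := abs_lt.mp hx
    rw [abs_lt]; constructor <;> [simp only [hadef]; simp only [hadef]] <;> linarith [this.1, this.2]
  have hball1 : ∀ x ∈ Metric.ball q ε, |x| < 1 := fun x hx => lt_trans (hball x hx) ha1
  -- apply dominated differentiation
  have hmeas : ∀ᶠ x in nhds q,
      MeasureTheory.AEStronglyMeasurable (Fp x) (MeasureTheory.volume.restrict (Set.uIoc 0 (π/2))) := by
    filter_upwards [Metric.ball_mem_nhds q hε] with x hx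
    exact ((cont_Fp (hball1 x hx)).measurable).aestronglyMeasurable
  have hFint : IntervalIntegrable (Fp q) MeasureTheory.volume 0 (π/2) :=
    (cont_Fp hqabs).intervalIntegrable _ _
  have hF'meas : MeasureTheory.AEStronglyMeasurable (Fp' q)
      (MeasureTheory.volume.restrict (Set.uIoc 0 (π/2))) :=
    ((cont_Fp' hqabs).measurable).aestronglyMeasurable
  have hbound : ∀ᵐ t : ℝ, t ∈ Set.uIoc 0 (π/2) → ∀ x ∈ Metric.ball q ε,
      ‖Fp' x t‖ ≤ (fun _ : ℝ => 4/(δ*Real.sqrt δ)) t := by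
    refine Filter.Eventually.of_forall (fun t _ x hx => ?_)
    have hxa := hball x hx
    have hx1 := hball1 x hx
    have hxle : |x| ≤ 1 := hx1.le
    have hs1 : Real.sin t ^ 2 ≤ 1 := Real.sin_sq_le_one t
    have hs0 : 0 ≤ Real.sin t ^ 2 := sq_nonneg _
    have hwx : δ ≤ 1 - x^2 * Real.sin t^2 := by
      have hx2 : x^2 ≤ a^2 := by nlinarith [abs_nonneg x, sq_abs x, hxa.le, ha0]
      simp only [hδdef]; nlinarith
    have hsw : Real.sqrt δ ≤ Real.sqrt (1 - x^2 * Real.sin t^2) := Real.sqrt_le_sqrt hwx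
    have hprod : δ * Real.sqrt δ ≤ (1 - x^2 * Real.sin t^2) * Real.sqrt (1 - x^2 * Real.sin t^2) := by
      apply mul_le_mul hwx hsw hsδ.le (by linarith [w_pos hx1 t])
    have hpδ : 0 < δ * Real.sqrt δ := mul_pos hδ hsδ
    have hb1 : |2*x / Real.sqrt (1 - x^2*Real.sin t^2)| ≤ 2/Real.sqrt δ := by
      apply abs_div_le' _ hsw hsδ
      have h2x : |2*x| = 2*|x| := by rw [abs_mul]; norm_num
      rw [h2x]; linarith
    have hb2 : |x*(x^2-1)*Real.sin t^2 / ((1 - x^2*Real.sin t^2) * Real.sqrt (1 - x^2*Real.sin t^2))|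
        ≤ 1/(δ*Real.sqrt δ) := by
      apply abs_div_le' _ hprod hpδ
      have h1 : |x*(x^2-1)| ≤ 1 := by
        have hxsq : x^2 < 1 := by
          have h := abs_lt.mp hx1; nlinarith [h.1, h.2]
        have h2 : |x^2-1| ≤ 1 := by
          rw [abs_le]; constructor
          · nlinarith [sq_nonneg x]
          · nlinarith [sq_nonneg x]
        rw [abs_mul]
        calc |x| * |x^2-1| ≤ 1 * 1 := mul_le_mul hxle h2 (abs_nonneg _) one_pos.le
          _ = 1 := by ring
      calc |x*(x^2-1)*Real.sin t^2| = |x*(x^2-1)| * |Real.sin t^2| := abs_mul _ _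
        _ ≤ 1 * 1 := by
            apply mul_le_mul h1 _ (abs_nonneg _) one_pos.le
            rw [abs_of_nonneg hs0]; exact hs1
        _ = 1 := by ring
    have hb3 : |x*Real.sin t^2 / Real.sqrt (1 - x^2*Real.sin t^2)| ≤ 1/Real.sqrt δ := by
      apply abs_div_le' _ hsw hsδ
      rw [abs_mul]
      calc |x| * |Real.sin t^2| ≤ 1 * 1 := by
            apply mul_le_mul hxle _ (abs_nonneg _) one_pos.le
            rw [abs_of_nonneg hs0]; exact hs1
        _ = 1 := by ring
    have hmono : (1:ℝ)/Real.sqrt δ ≤ 1/(δ*Real.sqrt δ) := by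
      apply div_le_div₀ one_pos.le le_rfl hpδ
      nlinarith
    have htri : ∀ A B C : ℝ, |A + B - C| ≤ |A| + |B| + |C| := by
      intro A B C
      have h1 := abs_add_le (A+B) (-C)
      have h2 := abs_add_le A B
      rw [abs_neg] at h1
      have h3 : A + B - C = A + B + (-C) := by ring
      rw [h3]; linarith
    calc ‖Fp' x t‖ ≤ |2*x / Real.sqrt (1 - x^2*Real.sin t^2)|
          + |x*(x^2-1)*Real.sin t^2 / ((1 - x^2*Real.sin t^2) * Real.sqrt (1 - x^2*Real.sin t^2))|
          + |x*Real.sin t^2 / Real.sqrt (1 - x^2*Real.sin t^2)| := by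
            simp only [Real.norm_eq_abs, Fp']
            exact htri _ _ _
      _ ≤ 2/Real.sqrt δ + 1/(δ*Real.sqrt δ) + 1/Real.sqrt δ :=
            add_le_add (add_le_add hb1 hb2) hb3
      _ ≤ 2/(δ*Real.sqrt δ) + 1/(δ*Real.sqrt δ) + 1/(δ*Real.sqrt δ) := by
            have h2 : (2:ℝ)/Real.sqrt δ ≤ 2/(δ*Real.sqrt δ) := by
              apply div_le_div₀ (by norm_num) le_rfl hpδ; nlinarith
            exact add_le_add (add_le_add h2 le_rfl) hmono
      _ = 4/(δ*Real.sqrt δ) := by ring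
  have hdiff : ∀ᵐ t : ℝ, t ∈ Set.uIoc 0 (π/2) → ∀ x ∈ Metric.ball q ε,
      HasDerivAt (fun x => Fp x t) (Fp' x t) x :=
    Filter.Eventually.of_forall (fun t _ x hx => deriv_x (hball1 x hx) t)
  have key := intervalIntegral.hasDerivAt_integral_of_dominated_loc_of_deriv_le
    (F := Fp) (F' := Fp') (x₀ := q) (a := 0) (b := π/2) (μ := MeasureTheory.volume)
    (bound := fun _ => 4/(δ*Real.sqrt δ)) (Metric.ball_mem_nhds q hε) hmeas hFint hF'meas hbound
    intervalIntegrable_const hdiff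
  -- identify the integral of Fp' q with q * Kc q
  have hcont_g : Continuous (fun θ : ℝ => q * (1 / Real.sqrt (1 - q^2 * Real.sin θ^2))) :=
    continuous_const.mul (cont_inv_sqrtw hqabs)
  have hint_g : IntervalIntegrable (fun θ : ℝ => q * (1 / Real.sqrt (1 - q^2 * Real.sin θ^2)))
      MeasureTheory.volume 0 (π/2) := hcont_g.intervalIntegrable _ _
  have hint_h : IntervalIntegrable
      (fun θ : ℝ => Fp' q θ - q * (1 / Real.sqrt (1 - q^2 * Real.sin θ^2)))
      MeasureTheory.volume 0 (π/2) := ((cont_Fp' hqabs).sub hcont_g).intervalIntegrable _ _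
  have hval : (∫ θ in (0:ℝ)..(π/2), Fp' q θ) = q * Kc q := by
    have hsplit : (fun θ : ℝ => Fp' q θ)
        = fun θ => q * (1 / Real.sqrt (1 - q^2 * Real.sin θ^2))
            + (Fp' q θ - q * (1 / Real.sqrt (1 - q^2 * Real.sin θ^2))) := by
      funext θ; ring
    rw [hsplit, intervalIntegral.integral_add hint_g hint_h]
    have h1 : (∫ θ in (0:ℝ)..(π/2), q * (1 / Real.sqrt (1 - q^2 * Real.sin θ^2))) = q * Kc q := by
      rw [Kc, intervalIntegral.integral_const_mul]
    have h2 : (∫ θ in (0:ℝ)..(π/2),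
        (Fp' q θ - q * (1 / Real.sqrt (1 - q^2 * Real.sin θ^2)))) = 0 := by
      rw [intervalIntegral.integral_eq_sub_of_hasDerivAt
        (fun θ _ => deriv_theta hqabs θ) hint_h]
      simp [Real.sin_pi_div_two, Real.cos_pi_div_two]
    rw [h1, h2]; ring
  -- transfer along local equality
  have heq : (fun x => x^2 * Kc x - Kc x + Ec x)
      =ᶠ[nhds q] (fun x => ∫ θ in (0:ℝ)..(π/2), Fp x θ) := by
    filter_upwards [Metric.ball_mem_nhds q hε] with x hx
    have hx1 := hball1 x hx
    have hintK : IntervalIntegrable (fun θ : ℝ => 1 / Real.sqrt (1 - x^2 * Real.sin θ^2))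
        MeasureTheory.volume 0 (π/2) := (cont_inv_sqrtw hx1).intervalIntegrable _ _
    have hintE : IntervalIntegrable (fun θ : ℝ => Real.sqrt (1 - x^2 * Real.sin θ^2))
        MeasureTheory.volume 0 (π/2) := cont_sqrtw.intervalIntegrable _ _
    have : x^2 * Kc x - Kc x + Ec x
        = (x^2 - 1) * (∫ θ in (0:ℝ)..(π/2), 1 / Real.sqrt (1 - x^2 * Real.sin θ^2))
          + ∫ θ in (0:ℝ)..(π/2), Real.sqrt (1 - x^2 * Real.sin θ^2) := by
      rw [Kc, Ec]; ring
    rw [this, ← intervalIntegral.integral_const_mul,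
      ← intervalIntegral.integral_add (hintK.const_mul _) hintE]
    apply intervalIntegral.integral_congr
    intro θ _
    simp only [Fp]
    rw [mul_one_div]
  have := key.2
  rw [hval] at this
  exact HasDerivAt.congr_of_eventuallyEq this heq
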